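/- Let G be a finite group with at least two elements, M = Matrix G G ℂ with the products (ω ⋆ τ)(s,t) = Σ_{r∈G} τ(r,r) ω(s r⁻¹, t r⁻¹) and (ω • τ)(s,t) = ω(s,t) Σ_{u∈G} τ(u, t s⁻¹ u), M₀ the trace-zero matrices, and ρ ∘ τ := (1/2)(ρ ⋆ τ − τ • ρ). Then the algebra (M₀, ∘) is noncommutative: there exist ρ, τ ∈ M₀ with ρ ∘ τ ≠ τ ∘ ρ. -/

import Mathlib

open scoped BigOperators

/-- `(ω ⋆ τ)(s,t) = Σ_{r∈G} τ(r,r) ω(s r⁻¹, t r⁻¹)`. -/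
noncomputable def starConv {G : Type*} [Group G] [Fintype G]
    (ω τ : Matrix G G ℂ) : Matrix G G ℂ :=
  Matrix.of fun s t => ∑ r : G, τ r r * ω (s * r⁻¹) (t * r⁻¹)

/-- `(ω • τ)(s,t) = ω(s,t) Σ_{u∈G} τ(u, t s⁻¹ u)`. -/
noncomputable def bulConv {G : Type*} [Group G] [Fintype G]
    (ω τ : Matrix G G ℂ) : Matrix G G ℂ :=
  Matrix.of fun s t => ω s t * ∑ u : G, τ u (t * s⁻¹ * u)

/-- The mixed Lie-type product `ρ ∘ τ = (1/2)(ρ ⋆ τ − τ • ρ)`. -/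
noncomputable def circConv {G : Type*} [Group G] [Fintype G]
    (ρ τ : Matrix G G ℂ) : Matrix G G ℂ :=
  (2 : ℂ)⁻¹ • (starConv ρ τ - bulConv τ ρ)

/-- if `|G| ≥ 2` then `(M₀, ∘)` is noncommutative. -/
theorem circConv_noncommutative {G : Type*} [Group G] [Fintype G]
    (hG : 2 ≤ Fintype.card G) :
    ∃ ρ τ : Matrix G G ℂ, ρ.trace = 0 ∧ τ.trace = 0 ∧
      circConv ρ τ ≠ circConv τ ρ := by
  classical
  obtain ⟨a, ha⟩ := Fintype.exists_ne_of_one_lt_card hG 1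
  set ρ : Matrix G G ℂ := Matrix.of fun s t => if s = 1 ∧ t = a then (1:ℂ) else 0 with hρ
  set τ : Matrix G G ℂ := Matrix.of fun s t => if s = a ∧ t = a * a then (1:ℂ) else 0 with hτ
  have hρd : ∀ r : G, ρ r r = 0 := by
    intro r; simp only [hρ, Matrix.of_apply, ite_eq_right_iff, and_imp]
    rintro rfl rfl; exact absurd rfl ha
  have hτd : ∀ r : G, τ r r = 0 := by
    intro r; simp only [hτ, Matrix.of_apply, ite_eq_right_iff, and_imp]
    rintro rfl h; exact absurd (left_eq_mul.mp h) ha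
  refine ⟨ρ, τ, ?_, ?_, ?_⟩
  · simp [Matrix.trace, Matrix.diag, hρd]
  · simp [Matrix.trace, Matrix.diag, hτd]
  · intro h
    have h2 := congrFun (congrFun h a) (a * a)
    have hstar1 : starConv ρ τ a (a * a) = 0 := by
      simp [starConv, hτd]
    have hstar2 : starConv τ ρ a (a * a) = 0 := by
      simp [starConv, hρd]
    have hbul1 : bulConv τ ρ a (a * a) = 1 := by
      simp only [bulConv, Matrix.of_apply, hτ, hρ]
      rw [if_pos (⟨trivial, trivial⟩ : True ∧ True), one_mul, Finset.sum_eq_single 1 (fun b _ hb => by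
        simp only [ite_eq_right_iff, and_imp]; rintro rfl; exact absurd rfl hb)
        (fun h => absurd (Finset.mem_univ 1) h)]
      simp [mul_assoc]
    have hbul2 : bulConv ρ τ a (a * a) = 0 := by
      simp only [bulConv, Matrix.of_apply, hρ]
      rw [if_neg (by rintro ⟨rfl, -⟩; exact ha rfl), zero_mul]
    rw [circConv, circConv] at h2
    simp only [Matrix.smul_apply, Matrix.sub_apply, hstar1, hstar2, hbul1, hbul2,
      smul_eq_mul] at h2
    norm_num at h2
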